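/- Let S be a semidomain. If S is a bounded factorization semidomain, witnessed by a length function ℓ on S*, then the map ℓ_x(f) = ℓ(leading coefficient of f) + deg f is a length function on S[x]*; hence S[x] is a bounded factorization semidomain. -/

import Mathlib

open Polynomial

/-- A witness that the commutative semiring `S` embeds into an integral domain. -/
structure SemidomainWitness (S : Type) [CommSemiring S] : Type 1 where
  R : Type
  [commRing : CommRing R]
  [isDomain : IsDomain R]
  f : S →+* R
  inj : Function.Injective f

/-- A semidomain is a commutative semiring that embeds into an integral domain. -/
def IsSemidomain (S : Type) [CommSemiring S] : Prop :=
  Nonempty (SemidomainWitness S)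


theorem nzd_of_witness {S : Type} [CommSemiring S] {R : Type} [CommRing R] [IsDomain R]
    (φ : S →+* R) (inj : Function.Injective φ) : NoZeroDivisors S := by
  refine ⟨fun {a b} h => ?_⟩
  have h2 : φ a * φ b = 0 := by rw [← map_mul, h, map_zero]
  rcases mul_eq_zero.mp h2 with h3 | h3
  · exact Or.inl (inj (h3.trans (map_zero φ).symm))
  · exact Or.inr (inj (h3.trans (map_zero φ).symm))

/-- Let `S` be a semidomain that is a bounded factorization semidomain, witnessed by a length
function `ℓ` on its nonzero elements. Then `ℓ_x(f) = ℓ(leadingCoeff f) + deg f` is a length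
function on the nonzero elements of `S[x]`; hence `S[x]` is a bounded factorization
semidomain. -/
theorem stmt12 (S : Type) [CommSemiring S] (hS : IsSemidomain S) (ℓ : S → ℕ)
    (hu : ∀ a : S, a ≠ 0 → (ℓ a = 0 ↔ IsUnit a))
    (hmul : ∀ a b : S, a ≠ 0 → b ≠ 0 → ℓ a + ℓ b ≤ ℓ (a * b)) :
    (∀ f : Polynomial S, f ≠ 0 →
      (ℓ f.leadingCoeff + f.natDegree = 0 ↔ IsUnit f)) ∧
    (∀ f g : Polynomial S, f ≠ 0 → g ≠ 0 →
      (ℓ f.leadingCoeff + f.natDegree) + (ℓ g.leadingCoeff + g.natDegree) ≤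
        ℓ (f * g).leadingCoeff + (f * g).natDegree) := by
  obtain ⟨W⟩ := hS
  haveI : NoZeroDivisors S :=
    @nzd_of_witness S _ W.R W.commRing W.isDomain W.f W.inj
  constructor
  · intro f hf
    constructor
    · intro h
      obtain ⟨h1, h2⟩ := Nat.add_eq_zero.mp h
      obtain ⟨a, rfl⟩ := Polynomial.natDegree_eq_zero.mp h2
      have ha : a ≠ 0 := fun h => hf (by rw [h, map_zero])
      have : ℓ a = 0 := by simpa [Polynomial.leadingCoeff_C] using h1
      exact Polynomial.isUnit_C.mpr ((hu a ha).mp this)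
    · intro h
      obtain ⟨g, hg⟩ := h.exists_right_inv
      have hg0 : g ≠ 0 := by
        intro h0
        apply hf
        have : (1 : Polynomial S) = 0 := by rw [← hg, h0, mul_zero]
        calc f = f * 1 := (mul_one f).symm
        _ = 0 := by rw [this, mul_zero]
      have hdeg : f.natDegree + g.natDegree = 0 := by
        rw [← Polynomial.natDegree_mul hf hg0, hg, Polynomial.natDegree_one]
      have hlc : f.leadingCoeff * g.leadingCoeff = 1 := by
        rw [← Polynomial.leadingCoeff_mul, hg, Polynomial.leadingCoeff_one]
      have hlcu : IsUnit f.leadingCoeff := ⟨⟨_, _, hlc, by rw [mul_comm]; exact hlc⟩, rfl⟩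
      have := (hu f.leadingCoeff (Polynomial.leadingCoeff_ne_zero.mpr hf)).mpr hlcu
      omega
  · intro f g hf hg
    rw [Polynomial.leadingCoeff_mul, Polynomial.natDegree_mul hf hg]
    have := hmul f.leadingCoeff g.leadingCoeff (Polynomial.leadingCoeff_ne_zero.mpr hf)
      (Polynomial.leadingCoeff_ne_zero.mpr hg)
    omega
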